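/- For every T > 0 and every s < d_S/4, the Strichartz estimate ‖S_t ψ‖_{L⁴_t L⁴_x([0,T]×SG)} ≤ C(T) ‖ψ‖_{H^s(SG)} fails: there exists a sequence of localized eigenfunctions ψ^{(j)} with ‖S_tψ^{(j)}‖_{L⁴_tL⁴_x}⁴ = T‖ψ^{(j)}‖_{L⁴}⁴ ≳ T λ_{ψ^{(j)}}^{d_S/4·2·2} while ‖ψ^{(j)}‖_{H^s}² ≃ λ_{ψ^{(j)}}^{s}, and λ_{ψ^{(j)}} → ∞, so the ratio ‖S_tψ^{(j)}‖_{L⁴L⁴}/‖ψ^{(j)}‖_{H^s} → ∞. -/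

import Mathlib

open MeasureTheory Filter

/-- Failure of the Strichartz estimate below `d_S/4` on the Sierpinski gasket: for a family of
localized `L²`-normalized eigenfunctions `ψ^{(j)}` with eigenvalues `λ_j = c·5^j`, saturating
the Sobolev embedding (`‖ψ^{(j)}‖_{L⁴}⁴ ≳ λ_j^{d_S/2}`) and with `‖ψ^{(j)}‖_{H^s} ≃ λ_j^{s/2}`,
one has `‖S_tψ^{(j)}‖⁴_{L⁴_tL⁴_x([0,T]×X)} = T‖ψ^{(j)}‖_{L⁴}⁴`; for every `T > 0` and
`s < d_S/4` no constant `C` can satisfy `‖S_tψ‖_{L⁴L⁴} ≤ C‖ψ‖_{H^s}` along the family, and the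
ratio `‖S_tψ^{(j)}‖_{L⁴L⁴}/‖ψ^{(j)}‖_{H^s}` tends to infinity. -/
theorem stmt_16 {X : Type*} [MeasurableSpace X] (μ : Measure X)
    (dS : ℝ) (hdS : dS = Real.log 9 / Real.log 5)
    (S : ℝ → (X → ℂ) → (X → ℂ)) (ψ : ℕ → X → ℝ) (lam : ℕ → ℝ)
    (HsNorm : ℝ → (X → ℝ) → ℝ)
    (c c' c1 c2 : ℝ) (hc : 0 < c) (hc' : 0 < c') (hc1 : 0 < c1) (hc2 : 0 < c2)
    (hlam : ∀ j, lam j = c * 5 ^ j)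
    (heig : ∀ (j : ℕ) (t : ℝ), S t (fun y => (ψ j y : ℂ)) =
      fun x => Complex.exp (-(Complex.I * t * lam j)) * (ψ j x : ℂ))
    (hL2 : ∀ j, ∫ x, (ψ j x) ^ 2 ∂μ = 1)
    (hint4 : ∀ j, Integrable (fun x => (ψ j x) ^ 4) μ)
    (hL4 : ∀ j, c' * lam j ^ (dS / 2) ≤ ∫ x, (ψ j x) ^ 4 ∂μ)
    (hHs : ∀ (s : ℝ) (j : ℕ),
      c1 * lam j ^ (s / 2) ≤ HsNorm s (ψ j) ∧ HsNorm s (ψ j) ≤ c2 * lam j ^ (s / 2)) :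
    ∀ T : ℝ, 0 < T → ∀ s : ℝ, s < dS / 4 →
      (∀ j : ℕ,
        ((∫ t in (0:ℝ)..T, ∫ x,
            (‖S t (fun y => (ψ j y : ℂ)) x‖) ^ 4 ∂μ) ^ ((1:ℝ)/4)) ^ 4 =
          T * ∫ x, (ψ j x) ^ 4 ∂μ) ∧
      (∀ C : ℝ, ∃ j : ℕ, C * HsNorm s (ψ j) <
        (∫ t in (0:ℝ)..T, ∫ x,
            (‖S t (fun y => (ψ j y : ℂ)) x‖) ^ 4 ∂μ) ^ ((1:ℝ)/4)) ∧
      Tendsto (fun j : ℕ =>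
        ((∫ t in (0:ℝ)..T, ∫ x,
            (‖S t (fun y => (ψ j y : ℂ)) x‖) ^ 4 ∂μ) ^ ((1:ℝ)/4)) /
          HsNorm s (ψ j)) atTop atTop := by

  intro T hT s hs
  have hlampos : ∀ j, 0 < lam j := fun j => by
    rw [hlam]; positivity
  have hI4pos : ∀ j, 0 < ∫ x, (ψ j x) ^ 4 ∂μ := fun j =>
    lt_of_lt_of_le (mul_pos hc' (Real.rpow_pos_of_pos (hlampos j) _)) (hL4 j)
  have habs : ∀ j (t : ℝ) x, ‖S t (fun y => (ψ j y : ℂ)) x‖ = |ψ j x| := by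
    intro j t x
    rw [heig j t]
    simp [Complex.norm_exp]
  have habs4 : ∀ (a : ℝ), |a| ^ 4 = a ^ 4 := fun a => by
    rw [← abs_pow, abs_of_nonneg (by positivity)]
  have key : ∀ j, (∫ t in (0:ℝ)..T, ∫ x,
      (‖S t (fun y => (ψ j y : ℂ)) x‖) ^ 4 ∂μ) = T * ∫ x, (ψ j x) ^ 4 ∂μ := by
    intro j
    have hx : ∀ t : ℝ, (∫ x, (‖S t (fun y => (ψ j y : ℂ)) x‖) ^ 4 ∂μ)
        = ∫ x, (ψ j x) ^ 4 ∂μ := by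
      intro t
      simp only [habs j t, habs4]
    simp only [hx]
    rw [intervalIntegral.integral_const]
    simp [smul_eq_mul]
  have hTI : ∀ j, (0:ℝ) < T * ∫ x, (ψ j x) ^ 4 ∂μ := fun j => mul_pos hT (hI4pos j)
  have hDpos : ∀ j, 0 < HsNorm s (ψ j) := fun j =>
    lt_of_lt_of_le (mul_pos hc1 (Real.rpow_pos_of_pos (hlampos j) _)) (hHs s j).1
  set α : ℝ := dS / 8 - s / 2 with hαdef
  have hα : 0 < α := by
    rw [hαdef]; linarith
  set K : ℝ := (T * c') ^ ((1:ℝ)/4) / c2 with hKdef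
  have hK : 0 < K := div_pos (Real.rpow_pos_of_pos (mul_pos hT hc') _) hc2
  -- lower bound for the ratio
  have hbound : ∀ j, K * lam j ^ α ≤
      (T * ∫ x, (ψ j x) ^ 4 ∂μ) ^ ((1:ℝ)/4) / HsNorm s (ψ j) := by
    intro j
    have hl := hlampos j
    have h1 : (lam j ^ (dS/2 : ℝ)) ^ ((1:ℝ)/4) = lam j ^ (dS/8 : ℝ) := by
      rw [← Real.rpow_mul hl.le]
      congr 1
      ring
    have h2 : (T * (c' * lam j ^ (dS/2 : ℝ))) ^ ((1:ℝ)/4)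
        = (T * c') ^ ((1:ℝ)/4) * lam j ^ (dS/8 : ℝ) := by
      rw [show T * (c' * lam j ^ (dS/2 : ℝ)) = (T * c') * lam j ^ (dS/2 : ℝ) by ring,
        Real.mul_rpow (mul_nonneg hT.le hc'.le) (Real.rpow_nonneg hl.le _), h1]
    have hnum : (T * (c' * lam j ^ (dS/2 : ℝ))) ^ ((1:ℝ)/4)
        ≤ (T * ∫ x, (ψ j x) ^ 4 ∂μ) ^ ((1:ℝ)/4) :=
      Real.rpow_le_rpow (by positivity)
        (mul_le_mul_of_nonneg_left (hL4 j) hT.le) (by norm_num)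
    have hstep : (T * (c' * lam j ^ (dS/2 : ℝ))) ^ ((1:ℝ)/4) / (c2 * lam j ^ (s/2 : ℝ))
        ≤ (T * ∫ x, (ψ j x) ^ 4 ∂μ) ^ ((1:ℝ)/4) / HsNorm s (ψ j) :=
      div_le_div₀ (Real.rpow_nonneg (hTI j).le _) hnum (hDpos j) (hHs s j).2
    refine le_trans (le_of_eq ?_) hstep
    rw [h2, mul_div_mul_comm, ← Real.rpow_sub hl]
  -- the lower bound tends to infinity
  have h5 : (1:ℝ) < (5:ℝ) ^ α :=
    (Real.one_lt_rpow_iff_of_pos (by norm_num)).mpr (Or.inl ⟨by norm_num, hα⟩)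
  have hgt : Tendsto (fun j : ℕ => K * lam j ^ α) atTop atTop := by
    have heqg : ∀ j : ℕ, K * lam j ^ α = (K * c ^ α) * ((5:ℝ) ^ α) ^ j := by
      intro j
      have hswap : (((5:ℝ) ^ j : ℝ)) ^ α = ((5:ℝ) ^ α) ^ j := by
        rw [← Real.rpow_natCast (5:ℝ) j, ← Real.rpow_natCast ((5:ℝ) ^ α) j,
          ← Real.rpow_mul (by norm_num), ← Real.rpow_mul (by norm_num), mul_comm]
      rw [hlam, Real.mul_rpow hc.le (by positivity), hswap]
      ring
    have := (tendsto_pow_atTop_atTop_of_one_lt h5).const_mul_atTop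
      (mul_pos hK (Real.rpow_pos_of_pos hc α))
    exact this.congr fun j => (heqg j).symm
  have hR : Tendsto (fun j : ℕ =>
      (T * ∫ x, (ψ j x) ^ 4 ∂μ) ^ ((1:ℝ)/4) / HsNorm s (ψ j)) atTop atTop :=
    tendsto_atTop_mono hbound hgt
  refine ⟨fun j => ?_, fun C => ?_, ?_⟩
  · rw [key j, ← Real.rpow_natCast ((T * ∫ x, (ψ j x) ^ 4 ∂μ) ^ ((1:ℝ)/4)) 4,
      ← Real.rpow_mul (hTI j).le]
    norm_num
  · obtain ⟨j, hj⟩ := (hR.eventually_gt_atTop C).exists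
    exact ⟨j, by rw [key j]; exact (lt_div_iff₀ (hDpos j)).mp hj⟩
  · exact hR.congr fun j => by rw [key j]
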